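/- For every configuration f : [N] → [M], there exists a configuration g ∈ V_s (i.e., g restricted to the M largest indices (N−M, N] is injective) and a directed path in G(N, M) from f to g of length at most N. -/

import Mathlib

/-- Edge relation of the configuration graph `G(N, M)`:
`(f, g)` is an edge iff for all `k`, `g k ≠ f k` iff `k` is the largest index in its `f`-fiber. -/
def RoomEdge (N M : ℕ) (f g : Fin N → Fin M) : Prop :=
  ∀ k : Fin N, g k ≠ f k ↔ ∀ j : Fin N, f j = f k → j ≤ k

/-- A directed path of length `n` from `f` to `g` in `G(N, M)`. -/
def RoomPath (N M : ℕ) (f g : Fin N → Fin M) (n : ℕ) : Prop :=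
  ∃ p : ℕ → Fin N → Fin M, p 0 = f ∧ p n = g ∧ ∀ i < n, RoomEdge N M (p i) (p (i + 1))

/-- `V_s`: configurations injective on the `M` largest indices `(N−M, N]`
(0-indexed: indices `k` with `N - M ≤ k`). -/
def RoomVs (N M : ℕ) (f : Fin N → Fin M) : Prop :=
  ∀ j k : Fin N, N - M ≤ (j : ℕ) → N - M ≤ (k : ℕ) → f j = f k → j = k

/-- `V_c`: configurations constant on the `M` largest indices `(N−M, N]`. -/
def RoomVc (N M : ℕ) (f : Fin N → Fin M) : Prop :=
  ∀ j k : Fin N, N - M ≤ (j : ℕ) → N - M ≤ (k : ℕ) → f j = f k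

/-- `p` is injective on the top `ℓ` indices. -/
def SuffInj (N M ℓ : ℕ) (p : Fin N → Fin M) : Prop :=
  ∀ j k : Fin N, N - ℓ ≤ (j : ℕ) → N - ℓ ≤ (k : ℕ) → p j = p k → j = k

lemma room_step (N M ℓ : ℕ) (hM : 2 ≤ M) (hℓM : ℓ < M) (hℓN : ℓ < N)
    (p : Fin N → Fin M) (hp : SuffInj N M ℓ p) :
    ∃ q, RoomEdge N M p q ∧ SuffInj N M (ℓ + 1) q := by
  classical
  haveI : NeZero M := ⟨by omega⟩
  set k0 : Fin N := ⟨N - ℓ - 1, by omega⟩ with hk0def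
  -- every index in the top-ℓ injective suffix is the max of its fiber
  have hmaxS : ∀ k : Fin N, N - ℓ ≤ (k : ℕ) → ∀ j, p j = p k → j ≤ k := by
    intro k hk j hpj
    by_contra hjk
    have hkj : (k : ℕ) < (j : ℕ) := Fin.lt_def.mp (lt_of_not_ge hjk)
    have hjS : N - ℓ ≤ (j : ℕ) := by omega
    have := hp j k hjS hk hpj
    subst this
    omega
  obtain ⟨d, hd0, hdA⟩ :
      ∃ d : Fin M, d ≠ 0 ∧
        (¬ (∀ j, p j = p k0 → j ≤ k0) →
          ∀ k : Fin N, N - ℓ ≤ (k : ℕ) → p k + d ≠ p k0) := by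
    by_cases hk0 : ∀ j, p j = p k0 → j ≤ k0
    · refine ⟨⟨1, by omega⟩, fun h => ?_, fun h => absurd hk0 h⟩
      have h' := congrArg Fin.val h
      rw [Fin.val_zero] at h'
      exact one_ne_zero h' 
    · -- case A: find a value w not attained on the suffix
      set h : Fin ℓ → Fin M := fun i => p ⟨N - ℓ + i, by omega⟩ with hh
      have hinj : Function.Injective h := by
        intro a b hab
        have := hp ⟨N - ℓ + a, by omega⟩ ⟨N - ℓ + b, by omega⟩ (by simp) (by simp) hab
        have := Fin.mk.injEq .. ▸ this
        exact Fin.ext (by omega)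
      have hnsurj : ¬ Function.Surjective h := by
        intro hs
        have := Fintype.card_le_of_surjective h hs
        simp at this
        omega
      obtain ⟨w, hw⟩ : ∃ w : Fin M, ∀ i, h i ≠ w := by
        by_contra hc
        push_neg at hc
        exact hnsurj fun w => hc w
      have hSw : ∀ k : Fin N, N - ℓ ≤ (k : ℕ) → p k ≠ w := by
        intro k hk
        have hlt : (k : ℕ) - (N - ℓ) < ℓ := by omega
        have : k = ⟨N - ℓ + ((k : ℕ) - (N - ℓ)), by omega⟩ := Fin.ext (by simp; omega)
        rw [this]
        exact hw ⟨(k : ℕ) - (N - ℓ), hlt⟩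
      -- p k0 is attained on the suffix
      push_neg at hk0
      obtain ⟨j0, hpj0, hj0⟩ := hk0
      have hj0S : N - ℓ ≤ (j0 : ℕ) := by
        have : (k0 : ℕ) < (j0 : ℕ) := Fin.lt_def.mp hj0
        simp [hk0def] at this ⊢
        omega
      have hvw : p k0 ≠ w := by
        rw [← hpj0]; exact hSw j0 hj0S
      refine ⟨p k0 - w, sub_ne_zero.mpr hvw, fun _ k hk heq => ?_⟩
      have : p k = w := by
        have h1 : p k = p k0 - (p k0 - w) := eq_sub_of_add_eq heq
        rwa [sub_sub_cancel] at h1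
      exact hSw k hk this
  refine ⟨fun k => if (∀ j, p j = p k → j ≤ k) then p k + d else p k, ?_, ?_⟩
  · intro k
    by_cases hk : ∀ j, p j = p k → j ≤ k
    · simp only [if_pos hk]
      constructor
      · intro _; exact hk
      · intro _
        simpa using fun h : p k + d = p k => hd0 (by simpa using h)
    · simp only [if_neg hk]
      constructor
      · intro h; exact absurd rfl h
      · intro h; exact absurd h hk
  · intro j k hj hk hq
    simp only at hq
    -- each of j, k is either k0 or in the suffix
    have hcase : ∀ a : Fin N, N - (ℓ + 1) ≤ (a : ℕ) → a = k0 ∨ N - ℓ ≤ (a : ℕ) := by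
      intro a ha
      by_cases h : N - ℓ ≤ (a : ℕ)
      · exact Or.inr h
      · exact Or.inl (Fin.ext (by simp [hk0def]; omega))
    have hqS : ∀ a : Fin N, N - ℓ ≤ (a : ℕ) →
        (if (∀ j, p j = p a → j ≤ a) then p a + d else p a) = p a + d := by
      intro a ha; rw [if_pos (hmaxS a ha)]
    rcases hcase j hj with hj' | hj' <;> rcases hcase k hk with hk' | hk'
    · rw [hj', hk']
    · -- j = k0, k in suffix
      rw [hj'] at hq ⊢
      rw [hqS k hk'] at hq
      have hk0v : (k0 : ℕ) = N - ℓ - 1 := by rw [hk0def]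
      by_cases h0 : ∀ i, p i = p k0 → i ≤ k0
      · rw [if_pos h0] at hq
        have hpjk : p k0 = p k := add_right_cancel hq
        have hle : (k : ℕ) ≤ (k0 : ℕ) := by
          exact Fin.le_def.mp (h0 k hpjk.symm)
        omega
      · rw [if_neg h0] at hq
        exact absurd hq.symm (hdA h0 k hk')
    · -- k = k0, j in suffix
      rw [hk'] at hq ⊢
      rw [hqS j hj'] at hq
      have hk0v : (k0 : ℕ) = N - ℓ - 1 := by rw [hk0def]
      by_cases h0 : ∀ i, p i = p k0 → i ≤ k0
      · rw [if_pos h0] at hq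
        have hpjk : p j = p k0 := add_right_cancel hq
        have hle : (j : ℕ) ≤ (k0 : ℕ) := by
          exact Fin.le_def.mp (h0 j hpjk)
        omega
      · rw [if_neg h0] at hq
        exact absurd hq (hdA h0 j hj')
    · rw [hqS j hj', hqS k hk'] at hq
      exact hp j k hj' hk' (add_right_cancel hq)

lemma room_reach (N M : ℕ) (hM : 2 ≤ M) (r : ℕ) :
    ∀ ℓ (p : Fin N → Fin M), ℓ + r = N - (N - M) → SuffInj N M ℓ p →
      ∃ g, SuffInj N M (N - (N - M)) g ∧ RoomPath N M p g r := by
  induction r with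
  | zero =>
      intro ℓ p hℓ hp
      exact ⟨p, by simpa [← hℓ] using hp, fun _ => p, rfl, rfl, fun i hi => absurd hi (by omega)⟩
  | succ r ih =>
      intro ℓ p hℓ hp
      have hℓM : ℓ < M := by omega
      have hℓN : ℓ < N := by omega
      obtain ⟨q, hedge, hq⟩ := room_step N M ℓ hM hℓM hℓN p hp
      obtain ⟨g, hg, pp, hpp0, hppr, hppe⟩ := ih (ℓ + 1) q (by omega) hq
      refine ⟨g, hg, fun i => if i = 0 then p else pp (i - 1), by simp, by simp [hppr], ?_⟩
      intro i hi
      rcases Nat.eq_zero_or_pos i with h0 | h0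
      · subst h0
        simpa [hpp0] using hedge
      · have h1 : ¬ (i = 0) := by omega
        have h2 : ¬ (i + 1 = 0) := by omega
        simp only [if_neg h1, if_neg h2]
        have : i + 1 - 1 = (i - 1) + 1 := by omega
        rw [this]
        exact hppe (i - 1) (by omega)

theorem reach_Vs_in_at_most_N_steps (N M : ℕ) (hN : 1 ≤ N) (hM : 2 ≤ M)
    (f : Fin N → Fin M) :
    ∃ g : Fin N → Fin M, RoomVs N M g ∧ ∃ n ≤ N, RoomPath N M f g n := by
  have h0 : SuffInj N M 0 f := by
    intro j k hj hk _
    have := j.isLt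
    omega
  obtain ⟨g, hg, hpath⟩ := room_reach N M hM (N - (N - M)) 0 f (by omega) h0
  refine ⟨g, ?_, N - (N - M), by omega, hpath⟩
  intro j k hj hk hjk
  exact hg j k (by omega) (by omega) hjk
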